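/- For λ ∈ [0,1] and proper convex lower semi-continuous coercive functions φ, φ̃ : ℝ^d → (-∞,∞], with Γ(φ) = ∫φ dP + ∫ e^{-φ}: Γ(λφ + (1-λ)φ̃) ≤ λΓ(φ) + (1-λ)Γ(φ̃) - (λ(1-λ)/2) ∫_{ℝ^d} e^{-max{φ(x), φ̃(x)}} (φ(x) - φ̃(x))^2 dx, where the integrand is taken to be zero whenever max{φ(x), φ̃(x)} = ∞. -/

import Mathlib

open MeasureTheory

/-- The class `C_d` of proper, convex, lower semi-continuous, coercive functions
`ℝ^d → (-∞, ∞]`, encoded with values in `EReal`. -/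
def CdE (d : ℕ) (φ : EuclideanSpace ℝ (Fin d) → EReal) : Prop :=
  LowerSemicontinuous φ ∧
  (∀ x, φ x ≠ ⊥) ∧ (∃ x, φ x ≠ ⊤) ∧
  (∀ x y : EuclideanSpace ℝ (Fin d), ∀ l : ℝ, 0 ≤ l → l ≤ 1 →
    φ (l • x + (1 - l) • y) ≤ (l : EReal) * φ x + ((1 - l : ℝ) : EReal) * φ y) ∧
  Filter.Tendsto φ (Filter.cocompact _) Filter.atTop

/-- Positive part of an extended real, as `ℝ≥0∞`. -/
noncomputable def eposPart (y : EReal) : ENNReal :=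
  if y = ⊤ then ⊤ else ENNReal.ofReal y.toReal

/-- Extended-real-valued integral of an `EReal`-valued function. -/
noncomputable def eIntegral {α : Type*} [MeasurableSpace α] (μ : Measure α)
    (f : α → EReal) : EReal :=
  ((∫⁻ x, eposPart (f x) ∂μ : ENNReal) : EReal) -
    ((∫⁻ x, eposPart (-(f x)) ∂μ : ENNReal) : EReal)

/-- `e^{-y}`, with `e^{-∞} = 0`. -/
noncomputable def negExpE (y : EReal) : ℝ :=
  if y = ⊤ then 0 else Real.exp (-(y.toReal))

/-- The objective `Γ(φ) = ∫ φ dP + ∫ e^{-φ(x)} dx`. -/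
noncomputable def GammaLC (d : ℕ) (P : Measure (EuclideanSpace ℝ (Fin d)))
    (φ : EuclideanSpace ℝ (Fin d) → EReal) : EReal :=
  eIntegral P φ +
    ((∫⁻ x, ENNReal.ofReal (negExpE (φ x)) ∂(volume : Measure (EuclideanSpace ℝ (Fin d)))
      : ENNReal) : EReal)

/-! ### Auxiliary real analysis lemmas -/

lemma core_exp (l : ℝ) (h0 : 0 ≤ l) (h1 : l ≤ 1) {h : ℝ} (hh : 0 ≤ h) :
    Real.exp (l*h) + l*(1-l)/2*h^2 ≤ l * Real.exp h + (1-l) := by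
  set F : ℝ → ℝ := fun t => l * Real.exp t + (1-l) - l*(1-l)/2*t^2 - Real.exp (l*t) with hF
  have hderiv : ∀ t, HasDerivAt F (l * Real.exp t - l*(1-l)*t - l * Real.exp (l*t)) t := by
    intro t
    have h1' : HasDerivAt (fun t : ℝ => l * Real.exp t) (l * Real.exp t) t :=
      (Real.hasDerivAt_exp t).const_mul l
    have h2' : HasDerivAt (fun t : ℝ => l*(1-l)/2*t^2) (l*(1-l)/2*(2*t)) t := by
      simpa using ((hasDerivAt_pow 2 t).const_mul (l*(1-l)/2))
    have h3' : HasDerivAt (fun t : ℝ => Real.exp (l*t)) (Real.exp (l*t) * l) t := by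
      exact (Real.hasDerivAt_exp (l*t)).comp t (by simpa using (hasDerivAt_id t).const_mul l)
    have := ((h1'.add_const (1-l)).sub h2').sub h3'
    exact this.congr_deriv (by ring)
  have hmono : MonotoneOn F (Set.Ici (0:ℝ)) := by
    apply monotoneOn_of_deriv_nonneg (convex_Ici 0)
    · exact (Continuous.continuousOn (by continuity))
    · intro t ht
      exact (hderiv t).differentiableAt.differentiableWithinAt
    · intro t ht
      rw [(hderiv t).deriv]
      simp only [interior_Ici, Set.mem_Ioi] at ht
      have e1 : Real.exp (l*t) * (1 + (1-l)*t) ≤ Real.exp (l*t) * Real.exp ((1-l)*t) := by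
        apply mul_le_mul_of_nonneg_left _ (Real.exp_nonneg _)
        exact Real.add_one_le_exp _ |>.trans_eq' (by ring_nf)
      have e2 : Real.exp (l*t) * Real.exp ((1-l)*t) = Real.exp t := by
        rw [← Real.exp_add]; ring_nf
      have e3 : (1:ℝ) ≤ Real.exp (l*t) := by
        rw [← Real.exp_zero]; exact Real.exp_le_exp.2 (by positivity)
      nlinarith [Real.exp_nonneg (l*t),
        mul_nonneg (mul_nonneg (sub_nonneg.2 h1) ht.le) (sub_nonneg.2 e3)]
  have h0' := hmono (Set.self_mem_Ici) (Set.mem_Ici.2 hh) hh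
  have : F 0 = 0 := by simp [hF]
  rw [this] at h0'
  simp only [hF] at h0'
  linarith

lemma key_exp (l a b : ℝ) (h0 : 0 ≤ l) (h1 : l ≤ 1) :
    Real.exp (-(l*a+(1-l)*b)) + l*(1-l)/2 * (Real.exp (-(max a b)) * (a-b)^2)
      ≤ l * Real.exp (-a) + (1-l) * Real.exp (-b) := by
  rcases le_total a b with hab | hab
  · have hm : max a b = b := max_eq_right hab
    have hh : 0 ≤ b - a := sub_nonneg.2 hab
    have hc := core_exp l h0 h1 hh
    have hE : Real.exp (-(l*a+(1-l)*b)) = Real.exp (l*(b-a)) * Real.exp (-b) := by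
      rw [← Real.exp_add]; ring_nf
    have hA : Real.exp (-a) = Real.exp (b-a) * Real.exp (-b) := by
      rw [← Real.exp_add]; ring_nf
    rw [hm, hE, hA]
    have hb := Real.exp_pos (-b)
    nlinarith [hb, sq_nonneg (a-b)]
  · have hm : max a b = a := max_eq_left hab
    have hh : 0 ≤ a - b := sub_nonneg.2 hab
    have hc := core_exp (1-l) (by linarith) (by linarith) hh
    have hE : Real.exp (-(l*a+(1-l)*b)) = Real.exp ((1-l)*(a-b)) * Real.exp (-a) := by
      rw [← Real.exp_add]; ring_nf
    have hB : Real.exp (-b) = Real.exp (a-b) * Real.exp (-a) := by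
      rw [← Real.exp_add]; ring_nf
    rw [hm, hE, hB]
    have ha := Real.exp_pos (-a)
    nlinarith [ha, sq_nonneg (a-b)]

lemma sq_le_exp_half {u : ℝ} (hu : 0 ≤ u) : u^2 ≤ 16 * Real.exp (u/2) := by
  set s := u/8 with hs
  have hs0 : 0 ≤ s := by positivity
  have h2 : (1 + s) ≤ Real.exp s := Real.add_one_le_exp _ |>.trans_eq' (by ring)
  have h3 : (0:ℝ) ≤ 1 + s := by linarith
  have h5 : (1 + s)^4 ≤ (Real.exp s)^4 := pow_le_pow_left₀ h3 h2 4
  have h6 : 4 * s^2 ≤ (1+s)^4 := by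
    nlinarith [sq_nonneg (1+s), sq_nonneg ((1+s)^2 - 2*s), sq_nonneg s]
  have h1 : Real.exp (u/2) = (Real.exp s)^4 := by
    rw [← Real.exp_nat_mul]
    congr 1
    rw [hs]; push_cast; ring
  rw [h1]
  have : u^2 = 64 * s^2 := by rw [hs]; ring
  nlinarith

lemma lintegral_exp_decay (d : ℕ) {ε : ℝ} (hε : 0 < ε) :
    (∫⁻ x : EuclideanSpace ℝ (Fin d),
      ENNReal.ofReal (Real.exp (-(ε * ‖x‖))) ∂volume) < ⊤ := by
  set cst : ℝ := min 1 (ε/(d+1)) with hcst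
  have hd1 : (0:ℝ) < (d:ℝ)+1 := by positivity
  have hcst0 : 0 < cst := lt_min one_pos (by positivity)
  set M : ℝ := (1/cst)^(d+1) with hM
  have hM0 : 0 < M := by positivity
  have hInt : Integrable (fun x : EuclideanSpace ℝ (Fin d) =>
      M * (1 + ‖x‖) ^ (-((d:ℝ)+1))) volume := by
    apply Integrable.const_mul
    apply integrable_one_add_norm
    rw [finrank_euclideanSpace_fin]
    linarith
  have hpt : ∀ x : EuclideanSpace ℝ (Fin d),
      Real.exp (-(ε * ‖x‖)) ≤ M * (1 + ‖x‖) ^ (-((d:ℝ)+1)) := by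
    intro x
    set t : ℝ := ‖x‖ with htdef
    have ht0 : 0 ≤ t := norm_nonneg _
    have h1t : (0:ℝ) < 1 + t := by linarith
    have hb : 1 + t ≤ (1/cst) * Real.exp (ε * t/(d+1)) := by
      have he : 1 + ε*t/(d+1) ≤ Real.exp (ε*t/(d+1)) :=
        Real.add_one_le_exp _ |>.trans_eq' (by ring)
      have h1 : cst ≤ 1 := min_le_left _ _
      have h2 : cst ≤ ε/(d+1) := min_le_right _ _
      have hc2 : cst * t ≤ ε*t/(d+1) := by
        have := mul_le_mul_of_nonneg_right h2 ht0
        calc cst * t ≤ (ε/(d+1)) * t := this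
          _ = ε*t/(d+1) := by ring
      have hc1 : cst * (1+t) ≤ 1 + ε*t/(d+1) := by nlinarith
      have hcc : cst * (1+t) ≤ Real.exp (ε*t/(d+1)) := le_trans hc1 he
      rw [one_div, ← div_eq_inv_mul, le_div_iff₀ hcst0]
      linarith [hcc]
    have hpow : (1+t)^(d+1) ≤ M * Real.exp (ε * t) := by
      calc (1+t)^(d+1) ≤ ((1/cst) * Real.exp (ε * t/(d+1)))^(d+1) :=
            pow_le_pow_left₀ h1t.le hb _
        _ = M * (Real.exp (ε*t/(d+1)))^(d+1) := by rw [mul_pow, hM]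
        _ = M * Real.exp (ε * t) := by
            rw [← Real.exp_nat_mul]
            congr 1
            push_cast
            field_simp
    have hrw : (1 + t) ^ (-((d:ℝ)+1)) = ((1+t)^(d+1) : ℝ)⁻¹ := by
      rw [Real.rpow_neg h1t.le]
      congr 1
      rw [show ((d:ℝ)+1) = ((d+1 : ℕ) : ℝ) by push_cast; ring, Real.rpow_natCast]
    have hp0 : (0:ℝ) < (1+t)^(d+1) := by positivity
    rw [hrw, ← div_eq_mul_inv, le_div_iff₀ hp0, Real.exp_neg,
      inv_mul_le_iff₀ (Real.exp_pos _)]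
    linarith [hpow]
  calc (∫⁻ x : EuclideanSpace ℝ (Fin d), ENNReal.ofReal (Real.exp (-(ε * ‖x‖))) ∂volume)
      ≤ ∫⁻ x : EuclideanSpace ℝ (Fin d), ‖M * (1 + ‖x‖) ^ (-((d:ℝ)+1))‖₊ ∂volume := by
        apply lintegral_mono
        intro x
        simp only [← enorm_eq_nnnorm, ← ofReal_norm_eq_enorm]
        exact ENNReal.ofReal_le_ofReal ((hpt x).trans (le_abs_self _))
    _ < ⊤ := hInt.2

/-! ### Structure lemmas for `CdE` -/

lemma CdE.bddBelow {d : ℕ} {φ : EuclideanSpace ℝ (Fin d) → EReal} (hφ : CdE d φ) :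
    ∃ m : ℝ, m ≤ 0 ∧ ∀ x, (m : EReal) ≤ φ x := by
  obtain ⟨hlsc, hbot, -, -, hcoer⟩ := hφ
  have h0 : ∀ᶠ x in Filter.cocompact _, (0:EReal) ≤ φ x :=
    hcoer.eventually_ge_atTop 0
  obtain ⟨K, hK, hKsub⟩ := Filter.mem_cocompact.1 h0
  have hchoice : ∀ x : K, ∃ r : ℝ, (r : EReal) < φ x := by
    intro x
    obtain ⟨r, hr1, hr2⟩ := EReal.exists_between_coe_real (Ne.bot_lt (hbot x))
    exact ⟨r, hr2⟩
  choose r hr using hchoice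
  have hopen : ∀ x : K, IsOpen {y | (r x : EReal) < φ y} := fun x => hlsc.isOpen_preimage _
  have hcover : K ⊆ ⋃ x : K, {y | (r x : EReal) < φ y} := by
    intro y hy
    exact Set.mem_iUnion.2 ⟨⟨y, hy⟩, hr ⟨y, hy⟩⟩
  obtain ⟨t, ht⟩ := hK.elim_finite_subcover _ hopen hcover
  set s : Finset ℝ := insert 0 (t.image r) with hs
  have hsne : s.Nonempty := ⟨0, Finset.mem_insert_self _ _⟩
  refine ⟨s.min' hsne, Finset.min'_le _ _ (Finset.mem_insert_self _ _), fun x => ?_⟩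
  by_cases hx : x ∈ K
  · obtain ⟨i, hiK, hit, hxi⟩ := by simpa using ht hx
    have : s.min' hsne ≤ r ⟨i, hiK⟩ :=
      Finset.min'_le _ _ (Finset.mem_insert_of_mem (Finset.mem_image_of_mem r hit))
    exact le_trans (by exact_mod_cast this) (le_of_lt hxi)
  · have : (0:EReal) ≤ φ x := hKsub hx
    refine le_trans ?_ this
    exact_mod_cast Finset.min'_le _ _ (Finset.mem_insert_self _ _)

lemma CdE.growth {d : ℕ} {φ : EuclideanSpace ℝ (Fin d) → EReal} (hφ : CdE d φ) :
    ∃ ε C : ℝ, 0 < ε ∧ ∀ x, ((ε * ‖x‖ - C : ℝ) : EReal) ≤ φ x := by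
  obtain ⟨m, hm0, hm⟩ := hφ.bddBelow
  obtain ⟨hlsc, hbot, ⟨x₀, hx₀⟩, hconv, hcoer⟩ := hφ
  set c : ℝ := (φ x₀).toReal with hc
  have hφx₀ : φ x₀ = (c : EReal) := (EReal.coe_toReal hx₀ (hbot x₀)).symm
  have h0 : ∀ᶠ x in Filter.cocompact _, ((c+1 : ℝ):EReal) ≤ φ x :=
    hcoer.eventually_ge_atTop _
  obtain ⟨K, hK, hKsub⟩ := Filter.mem_cocompact.1 h0
  obtain ⟨R, hR0, hRK⟩ : ∃ R : ℝ, 0 ≤ R ∧ K ⊆ Metric.closedBall 0 R := by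
    obtain ⟨R, hRK⟩ := hK.isBounded.subset_closedBall 0
    exact ⟨max R 0, le_max_right _ _,
      hRK.trans (Metric.closedBall_subset_closedBall (le_max_left _ _))⟩
  set r : ℝ := R + ‖x₀‖ + 1 with hrdef
  have hr0 : 0 < r := by positivity
  set ε : ℝ := 1 / r with hε
  have hε0 : 0 < ε := by positivity
  refine ⟨ε, max (ε*(r + ‖x₀‖) - m) (ε*‖x₀‖ - c), hε0, fun x => ?_⟩
  by_cases hxt : φ x = ⊤
  · simp [hxt]
  by_cases hnear : ‖x - x₀‖ ≤ r
  · refine le_trans ?_ (hm x)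
    have hxnorm : ‖x‖ ≤ r + ‖x₀‖ := by
      have := norm_sub_le (x - x₀) (-x₀)
      simp only [sub_neg_eq_add, sub_add_cancel, norm_neg] at this
      linarith
    have : ε * ‖x‖ - max (ε*(r + ‖x₀‖) - m) (ε*‖x₀‖ - c) ≤ m := by
      have h1 : ε * ‖x‖ ≤ ε * (r + ‖x₀‖) := by nlinarith
      have h2 : ε*(r + ‖x₀‖) - m ≤ max (ε*(r + ‖x₀‖) - m) (ε*‖x₀‖ - c) := le_max_left _ _
      linarith
    exact_mod_cast this
  · push_neg at hnear
    set t : ℝ := r / ‖x - x₀‖ with ht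
    have hd0 : (0:ℝ) < ‖x - x₀‖ := lt_trans hr0 hnear
    have ht0 : 0 < t := by positivity
    have ht1 : t < 1 := (div_lt_one hd0).2 hnear
    set z := t • x + (1 - t) • x₀ with hz
    have hzx₀ : z - x₀ = t • (x - x₀) := by
      rw [hz]; module
    have hznorm : ‖z - x₀‖ = r := by
      rw [hzx₀, norm_smul, Real.norm_eq_abs, abs_of_pos ht0, ht]
      field_simp
    have hzout : z ∉ K := by
      intro hzK
      have := hRK hzK
      rw [Metric.mem_closedBall, dist_zero_right] at this
      have h1 : ‖z - x₀‖ ≤ ‖z‖ + ‖x₀‖ := norm_sub_le _ _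
      rw [hznorm, hrdef] at h1
      linarith
    have hφz : ((c+1 : ℝ):EReal) ≤ φ z := hKsub hzout
    have hconv' := hconv x x₀ t ht0.le ht1.le
    set a : ℝ := (φ x).toReal with ha
    have hφx : φ x = (a : EReal) := (EReal.coe_toReal hxt (hbot x)).symm
    rw [hφx, hφx₀, ← hz] at hconv'
    have hcc : ((c+1 : ℝ):EReal) ≤ ((t * a + (1-t) * c : ℝ) : EReal) := by
      refine le_trans hφz (le_trans hconv' ?_)
      norm_cast
    have hreal : c + 1 ≤ t * a + (1-t) * c := by exact_mod_cast hcc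
    have hA : 1/t + c ≤ a := by
      have h1 : 1 ≤ t * (a - c) := by nlinarith
      have h2 : 1/t ≤ a - c := by
        rw [div_le_iff₀ ht0]; nlinarith
      linarith
    have hxx : ‖x‖ - ‖x₀‖ ≤ ‖x - x₀‖ := by
      have := norm_sub_norm_le x x₀
      linarith [le_abs_self (‖x‖ - ‖x₀‖)]
    have hfin : ε * ‖x‖ - max (ε*(r + ‖x₀‖) - m) (ε*‖x₀‖ - c) ≤ a := by
      have h2 : ε*‖x₀‖ - c ≤ max (ε*(r + ‖x₀‖) - m) (ε*‖x₀‖ - c) := le_max_right _ _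
      have h3 : 1/t = ‖x - x₀‖ / r := by rw [ht, one_div_div]
      have h4 : (‖x‖ - ‖x₀‖)/r ≤ ‖x - x₀‖/r := by gcongr
      have h5 : ε * ‖x‖ - ε * ‖x₀‖ = (‖x‖ - ‖x₀‖)/r := by rw [hε]; ring
      linarith
    rw [hφx]
    exact_mod_cast hfin

/-! ### EReal / ENNReal helpers -/

lemma negExpE_nonneg (y : EReal) : 0 ≤ negExpE y := by
  unfold negExpE; split
  · exact le_refl 0
  · exact (Real.exp_pos _).le

lemma measurable_eposPart : Measurable eposPart := by
  unfold eposPart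
  apply Measurable.ite
  · exact (measurableSet_singleton (⊤ : EReal)).congr (by ext y; simp)
  · exact measurable_const
  · exact ENNReal.measurable_ofReal.comp measurable_ereal_toReal

lemma measurable_negExpE : Measurable negExpE := by
  unfold negExpE
  apply Measurable.ite
  · exact (measurableSet_singleton (⊤ : EReal)).congr (by ext y; simp)
  · exact measurable_const
  · exact Real.measurable_exp.comp measurable_ereal_toReal.neg

lemma eposPart_neg_rep {y : EReal} (hy : y ≠ ⊥) :
    eposPart (-y) = ENNReal.ofReal (-(y.toReal)) := by
  induction y with
  | bot => exact absurd rfl hy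
  | coe r => simp [eposPart, ← EReal.coe_neg]
  | top => simp [eposPart]

lemma combo_rep {l : ℝ} (hl0 : 0 < l) (hl1 : l < 1) {y z : EReal} (hy : y ≠ ⊥) (hz : z ≠ ⊥) :
    (l : EReal) * y + ((1-l : ℝ) : EReal) * z =
      if y = ⊤ ∨ z = ⊤ then (⊤ : EReal)
      else ((l * y.toReal + (1-l) * z.toReal : ℝ) : EReal) := by
  have hl1' : (0:ℝ) < 1 - l := by linarith
  induction y with
  | bot => exact absurd rfl hy
  | coe a =>
    induction z with
    | bot => exact absurd rfl hz
    | coe b =>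
      rw [if_neg (not_or.2 ⟨EReal.coe_ne_top a, EReal.coe_ne_top b⟩)]
      simp only [EReal.toReal_coe]
      norm_cast
    | top =>
      rw [EReal.coe_mul_top_of_pos hl1']
      rw [if_pos (Or.inr rfl)]
      exact EReal.add_top_of_ne_bot (by rw [← EReal.coe_mul]; exact EReal.coe_ne_bot _)
  | top =>
    rw [EReal.coe_mul_top_of_pos hl0]
    rw [if_pos (Or.inl rfl)]
    apply EReal.top_add_of_ne_bot
    induction z with
    | bot => exact absurd rfl hz
    | coe b => rw [← EReal.coe_mul]; exact EReal.coe_ne_bot _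
    | top =>
      rw [EReal.coe_mul_top_of_pos hl1']
      exact (by simp : (⊤:EReal) ≠ ⊥)

lemma ofReal_max_eq (y : ℝ) : ENNReal.ofReal y = ENNReal.ofReal (max y 0) := by
  rcases le_total y 0 with h | h
  · simp [ENNReal.ofReal_of_nonpos h, max_eq_right h]
  · rw [max_eq_left h]

lemma max_sub_max_neg (y : ℝ) : max y 0 - max (-y) 0 = y := by
  rcases le_total y 0 with h | h
  · rw [max_eq_right h, max_eq_left (neg_nonneg.2 h)]; ring
  · rw [max_eq_left h, max_eq_right (neg_nonpos.2 h)]; ring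

lemma ofReal_combo_identity (l a b : ℝ) (h0 : 0 ≤ l) (h1 : l ≤ 1) :
    ENNReal.ofReal (l*a+(1-l)*b) + ENNReal.ofReal l * ENNReal.ofReal (-a)
        + ENNReal.ofReal (1-l) * ENNReal.ofReal (-b)
      = ENNReal.ofReal l * ENNReal.ofReal a + ENNReal.ofReal (1-l) * ENNReal.ofReal b
        + ENNReal.ofReal (-(l*a+(1-l)*b)) := by
  have h1' : (0:ℝ) ≤ 1 - l := by linarith
  have e1 : ENNReal.ofReal l * ENNReal.ofReal (-a) = ENNReal.ofReal (l * max (-a) 0) := by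
    rw [ofReal_max_eq (-a), ← ENNReal.ofReal_mul h0]
  have e2 : ENNReal.ofReal (1-l) * ENNReal.ofReal (-b) =
      ENNReal.ofReal ((1-l) * max (-b) 0) := by
    rw [ofReal_max_eq (-b), ← ENNReal.ofReal_mul h1']
  have e3 : ENNReal.ofReal l * ENNReal.ofReal a = ENNReal.ofReal (l * max a 0) := by
    rw [ofReal_max_eq a, ← ENNReal.ofReal_mul h0]
  have e4 : ENNReal.ofReal (1-l) * ENNReal.ofReal b = ENNReal.ofReal ((1-l) * max b 0) := by
    rw [ofReal_max_eq b, ← ENNReal.ofReal_mul h1']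
  rw [e1, e2, e3, e4, ofReal_max_eq (l*a+(1-l)*b), ofReal_max_eq (-(l*a+(1-l)*b))]
  rw [← ENNReal.ofReal_add (le_max_right _ _) (by positivity),
    ← ENNReal.ofReal_add (by positivity) (by positivity),
    ← ENNReal.ofReal_add (by positivity) (by positivity),
    ← ENNReal.ofReal_add (by positivity) (le_max_right _ _)]
  congr 1
  linear_combination max_sub_max_neg (l*a+(1-l)*b) - l * max_sub_max_neg a
    - (1-l) * max_sub_max_neg b

lemma EReal.coe_ennreal_eq {X : ENNReal} (h : X ≠ ⊤) :
    (X : EReal) = ((X.toReal : ℝ) : EReal) := by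
  rw [← EReal.toReal_coe_ennreal]
  exact (EReal.coe_toReal (by simpa using h) (EReal.coe_ennreal_ne_bot _)).symm

/-- Finiteness of the strong-convexity remainder integral. -/
lemma R_lt_top {d : ℕ} {φ φt : EuclideanSpace ℝ (Fin d) → EReal}
    (hφ : CdE d φ) (hφt : CdE d φt) :
    (∫⁻ x, ENNReal.ofReal
        (if φ x = ⊤ ∨ φt x = ⊤ then 0
         else Real.exp (-(max (φ x).toReal (φt x).toReal)) *
           ((φ x).toReal - (φt x).toReal) ^ 2)
        ∂(volume : Measure (EuclideanSpace ℝ (Fin d)))) < ⊤ := by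
  obtain ⟨m₁, hm₁0, hm₁⟩ := hφ.bddBelow
  obtain ⟨m₂, hm₂0, hm₂⟩ := hφt.bddBelow
  obtain ⟨ε₁, C₁, hε₁, hg₁⟩ := hφ.growth
  obtain ⟨ε₂, C₂, hε₂, hg₂⟩ := hφt.growth
  set m : ℝ := min m₁ m₂ with hmdef
  have hm0 : m ≤ 0 := le_trans (min_le_left _ _) hm₁0
  set ε : ℝ := min ε₁ ε₂ with hεdef
  have hε0 : 0 < ε := lt_min hε₁ hε₂
  set C : ℝ := max C₁ C₂ with hCdef
  set K : ℝ := 16 * Real.exp ((C - m)/2) with hKdef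
  have hK0 : 0 < K := by positivity
  have hpt : ∀ x : EuclideanSpace ℝ (Fin d),
      (if φ x = ⊤ ∨ φt x = ⊤ then 0
       else Real.exp (-(max (φ x).toReal (φt x).toReal)) *
         ((φ x).toReal - (φt x).toReal) ^ 2)
      ≤ K * Real.exp (-((ε/2) * ‖x‖)) := by
    intro x
    by_cases hT : φ x = ⊤ ∨ φt x = ⊤
    · rw [if_pos hT]; positivity
    · rw [if_neg hT]
      push_neg at hT
      set a : ℝ := (φ x).toReal with ha
      set b : ℝ := (φt x).toReal with hb
      have hφx : φ x = (a : EReal) := (EReal.coe_toReal hT.1 (hφ.2.1 x)).symm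
      have hφtx : φt x = (b : EReal) := (EReal.coe_toReal hT.2 (hφt.2.1 x)).symm
      have hma : m ≤ a := by
        have := hm₁ x; rw [hφx] at this
        exact le_trans (min_le_left _ _) (by exact_mod_cast this)
      have hmb : m ≤ b := by
        have := hm₂ x; rw [hφtx] at this
        exact le_trans (min_le_right _ _) (by exact_mod_cast this)
      have hga : ε * ‖x‖ - C ≤ a := by
        have := hg₁ x; rw [hφx] at this
        have h' : ε₁ * ‖x‖ - C₁ ≤ a := by exact_mod_cast this
        have h1 : ε * ‖x‖ ≤ ε₁ * ‖x‖ :=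
          mul_le_mul_of_nonneg_right (min_le_left _ _) (norm_nonneg _)
        have h2 : C₁ ≤ C := le_max_left _ _
        linarith
      set M : ℝ := max a b with hMdef
      set u : ℝ := M - m with hudef
      have hu0 : 0 ≤ u := by
        have : m ≤ M := le_trans hma (le_max_left _ _)
        simp [hudef]; linarith
      have habs : (a - b)^2 ≤ u^2 := by
        have h1 : a - b ≤ u := by
          have : a ≤ M := le_max_left _ _
          simp only [hudef]; linarith
        have h2 : b - a ≤ u := by
          have : b ≤ M := le_max_right _ _
          simp only [hudef]; linarith
        have : |a - b| ≤ u := abs_le.2 ⟨by linarith, h1⟩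
        calc (a-b)^2 = |a-b|^2 := (sq_abs _).symm
          _ ≤ u^2 := by nlinarith [abs_nonneg (a-b)]
      have hexpM : Real.exp (-M) = Real.exp (-m) * Real.exp (-u) := by
        rw [← Real.exp_add]; congr 1; simp [hudef]; ring
      have step1 : Real.exp (-M) * (a-b)^2 ≤ Real.exp (-m) * (Real.exp (-u) * u^2) := by
        rw [hexpM, mul_assoc]
        exact mul_le_mul_of_nonneg_left
          (mul_le_mul_of_nonneg_left habs (Real.exp_nonneg _)) (Real.exp_nonneg _)
      have step2 : Real.exp (-u) * u^2 ≤ 16 * Real.exp (-(u/2)) := by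
        have := sq_le_exp_half hu0
        have h2 : Real.exp (-u) * u^2 ≤ Real.exp (-u) * (16 * Real.exp (u/2)) :=
          mul_le_mul_of_nonneg_left this (Real.exp_nonneg _)
        calc Real.exp (-u) * u^2 ≤ Real.exp (-u) * (16 * Real.exp (u/2)) := h2
          _ = 16 * (Real.exp (-u) * Real.exp (u/2)) := by ring
          _ = 16 * Real.exp (-(u/2)) := by rw [← Real.exp_add]; congr 1; ring
      have step3 : Real.exp (-(u/2)) ≤ Real.exp ((C+m)/2) * Real.exp (-((ε/2) * ‖x‖)) := by
        rw [← Real.exp_add]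
        apply Real.exp_le_exp.2
        have hMge : ε * ‖x‖ - C ≤ M := le_trans hga (le_max_left _ _)
        simp only [hudef]
        linarith
      calc Real.exp (-M) * (a-b)^2
          ≤ Real.exp (-m) * (Real.exp (-u) * u^2) := step1
        _ ≤ Real.exp (-m) * (16 * Real.exp (-(u/2))) :=
            mul_le_mul_of_nonneg_left step2 (Real.exp_nonneg _)
        _ ≤ Real.exp (-m) * (16 * (Real.exp ((C+m)/2) * Real.exp (-((ε/2) * ‖x‖)))) :=
            mul_le_mul_of_nonneg_left
              (mul_le_mul_of_nonneg_left step3 (by norm_num)) (Real.exp_nonneg _)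
        _ = K * Real.exp (-((ε/2) * ‖x‖)) := by
            rw [hKdef]
            rw [show Real.exp (-m) * (16 * (Real.exp ((C+m)/2) * Real.exp (-((ε/2) * ‖x‖))))
              = 16 * (Real.exp (-m) * Real.exp ((C+m)/2)) * Real.exp (-((ε/2) * ‖x‖)) by ring]
            rw [← Real.exp_add]
            congr 2
            ring
  calc (∫⁻ x, ENNReal.ofReal
        (if φ x = ⊤ ∨ φt x = ⊤ then 0
         else Real.exp (-(max (φ x).toReal (φt x).toReal)) *
           ((φ x).toReal - (φt x).toReal) ^ 2)
        ∂(volume : Measure (EuclideanSpace ℝ (Fin d))))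
      ≤ ∫⁻ x, ENNReal.ofReal (K * Real.exp (-((ε/2) * ‖x‖)))
          ∂(volume : Measure (EuclideanSpace ℝ (Fin d))) :=
        lintegral_mono fun x => ENNReal.ofReal_le_ofReal (hpt x)
    _ = ENNReal.ofReal K * ∫⁻ x, ENNReal.ofReal (Real.exp (-((ε/2) * ‖x‖)))
          ∂(volume : Measure (EuclideanSpace ℝ (Fin d))) := by
        rw [← lintegral_const_mul]
        · congr 1
          ext x
          rw [← ENNReal.ofReal_mul hK0.le]
        · exact ENNReal.measurable_ofReal.comp
            (Real.measurable_exp.comp (measurable_norm.const_mul (ε/2)).neg)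
    _ < ⊤ := ENNReal.mul_lt_top ENNReal.ofReal_lt_top (lintegral_exp_decay d (by positivity))


lemma eposPart_coe (r : ℝ) : eposPart (r : ℝ) = ENNReal.ofReal r := by
  simp [eposPart, EReal.coe_ne_top]

lemma negExpE_coe (r : ℝ) : negExpE (r : ℝ) = Real.exp (-r) := by
  simp [negExpE, EReal.coe_ne_top]

lemma negExpE_top : negExpE ⊤ = 0 := by simp [negExpE]

lemma eposPart_top : eposPart ⊤ = ⊤ := by simp [eposPart]


lemma B_bound {α : Type*} [MeasurableSpace α] (P : MeasureTheory.Measure α)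
    [MeasureTheory.IsProbabilityMeasure P] {ψ : α → EReal} {m : ℝ} (hm0 : m ≤ 0)
    (hb : ∀ x, ψ x ≠ ⊥) (hm : ∀ x, (m:EReal) ≤ ψ x) :
    (∫⁻ x, eposPart (-(ψ x)) ∂P) ≤ ENNReal.ofReal (-m) := by
  calc (∫⁻ x, eposPart (-(ψ x)) ∂P) ≤ ∫⁻ _, ENNReal.ofReal (-m) ∂P := by
        apply lintegral_mono
        intro x
        show eposPart (-(ψ x)) ≤ ENNReal.ofReal (-m)
        rw [eposPart_neg_rep (hb x)]
        apply ENNReal.ofReal_le_ofReal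
        simp only [neg_le_neg_iff]
        by_cases ht : ψ x = ⊤
        · rw [ht]; simpa using hm0
        · have h1 := hm x
          have h2 : ((m:ℝ) : EReal).toReal ≤ (ψ x).toReal :=
            EReal.toReal_le_toReal h1 (EReal.coe_ne_bot m) ht
          simpa using h2
    _ = ENNReal.ofReal (-m) := by simp

lemma coe_pos_mul_ne_bot {c : ℝ} (hc : 0 < c) {x : EReal} (hx : x ≠ ⊥) :
    (c:EReal) * x ≠ ⊥ := by
  induction x with
  | bot => exact absurd rfl hx
  | coe r => rw [← EReal.coe_mul]; exact EReal.coe_ne_bot _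
  | top => rw [EReal.coe_mul_top_of_pos hc]; simp

lemma gamma_ne_bot {X Y Z : ENNReal} (hY : Y ≠ ⊤) :
    ((X:EReal) - (Y:EReal) + (Z:EReal)) ≠ ⊥ := by
  intro h
  rw [EReal.add_eq_bot_iff] at h
  rcases h with h | h
  · rw [sub_eq_add_neg, EReal.add_eq_bot_iff] at h
    rcases h with h | h
    · exact EReal.coe_ennreal_ne_bot _ h
    · rw [EReal.neg_eq_bot_iff] at h
      exact hY (EReal.coe_ennreal_eq_top_iff.1 h)
  · exact EReal.coe_ennreal_ne_bot _ h

lemma gamma_eq_top {X Y Z : ENNReal} (hY : Y ≠ ⊤) (h : X = ⊤ ∨ Z = ⊤) :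
    ((X:EReal) - (Y:EReal) + (Z:EReal)) = ⊤ := by
  rcases h with h | h
  · subst h
    rw [EReal.coe_ennreal_eq hY, EReal.coe_ennreal_top, EReal.top_sub_coe]
    exact EReal.top_add_of_ne_bot (EReal.coe_ennreal_ne_bot _)
  · subst h
    rw [EReal.coe_ennreal_top]
    apply EReal.add_top_of_ne_bot
    rw [sub_eq_add_neg]
    intro hcon
    rw [EReal.add_eq_bot_iff] at hcon
    rcases hcon with h | h
    · exact EReal.coe_ennreal_ne_bot _ h
    · rw [EReal.neg_eq_bot_iff] at h
      exact hY (EReal.coe_ennreal_eq_top_iff.1 h)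

theorem Gamma_strong_convexity (d : ℕ) (P : Measure (EuclideanSpace ℝ (Fin d)))
    [IsProbabilityMeasure P] (l : ℝ) (hl0 : 0 ≤ l) (hl1 : l ≤ 1)
    (φ φt : EuclideanSpace ℝ (Fin d) → EReal) (hφ : CdE d φ) (hφt : CdE d φt) :
    GammaLC d P (fun x => (l : EReal) * φ x + ((1 - l : ℝ) : EReal) * φt x) ≤
      (l : EReal) * GammaLC d P φ + ((1 - l : ℝ) : EReal) * GammaLC d P φt -
        ((l * (1 - l) / 2 : ℝ) : EReal) *
          ((∫⁻ x, ENNReal.ofReal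
              (if φ x = ⊤ ∨ φt x = ⊤ then 0
               else Real.exp (-(max (φ x).toReal (φt x).toReal)) *
                 ((φ x).toReal - (φt x).toReal) ^ 2)
              ∂(volume : Measure (EuclideanSpace ℝ (Fin d))) : ENNReal) : EReal) := by
  rcases hl0.eq_or_lt with heq | hl0'
  · -- l = 0
    subst heq
    have hfun : (fun x => ((0:ℝ) : EReal) * φ x + ((1 - 0 : ℝ) : EReal) * φt x) = φt := by
      funext x
      norm_num
    rw [hfun]
    norm_num
  rcases hl1.eq_or_lt with heq | hl1'
  · -- l = 1
    subst heq
    have hfun : (fun x => ((1:ℝ) : EReal) * φ x + ((1 - 1 : ℝ) : EReal) * φt x) = φ := by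
      funext x
      norm_num
    rw [hfun]
    norm_num
  -- main case : 0 < l < 1
  have hl1c : (0:ℝ) < 1 - l := by linarith
  have hbφ := hφ.2.1
  have hbφt := hφt.2.1
  obtain ⟨m₁, hm₁0, hm₁⟩ := hφ.bddBelow
  obtain ⟨m₂, hm₂0, hm₂⟩ := hφt.bddBelow
  set m : ℝ := min m₁ m₂ with hmdef
  have hm0 : m ≤ 0 := le_trans (min_le_left _ _) hm₁0
  have hmφ : ∀ x, (m:EReal) ≤ φ x := fun x =>
    le_trans (by exact_mod_cast min_le_left m₁ m₂) (hm₁ x)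
  have hmφt : ∀ x, (m:EReal) ≤ φt x := fun x =>
    le_trans (by exact_mod_cast min_le_right m₁ m₂) (hm₂ x)
  simp only [GammaLC, eIntegral]
  have hfc : ∀ x, (l : EReal) * φ x + ((1 - l : ℝ) : EReal) * φt x =
      if φ x = ⊤ ∨ φt x = ⊤ then (⊤ : EReal)
      else ((l * (φ x).toReal + (1-l) * (φt x).toReal : ℝ) : EReal) :=
    fun x => combo_rep hl0' hl1' (hbφ x) (hbφt x)
  have hfcbot : ∀ x, (l : EReal) * φ x + ((1 - l : ℝ) : EReal) * φt x ≠ ⊥ := by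
    intro x
    rw [hfc x]
    split
    · simp
    · exact EReal.coe_ne_bot _
  have hmc : ∀ x, (m : EReal) ≤ (l : EReal) * φ x + ((1 - l : ℝ) : EReal) * φt x := by
    intro x
    rw [hfc x]
    by_cases hT : φ x = ⊤ ∨ φt x = ⊤
    · rw [if_pos hT]; exact le_top
    · rw [if_neg hT]
      push_neg at hT
      have hma : m ≤ (φ x).toReal := by
        have h1 := hmφ x
        rw [(EReal.coe_toReal hT.1 (hbφ x)).symm] at h1
        exact_mod_cast h1
      have hmb : m ≤ (φt x).toReal := by
        have h1 := hmφt x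
        rw [(EReal.coe_toReal hT.2 (hbφt x)).symm] at h1
        exact_mod_cast h1
      apply EReal.coe_le_coe_iff.2
      nlinarith
  -- measurability
  have hmφm : Measurable φ := hφ.1.measurable
  have hmφtm : Measurable φt := hφt.1.measurable
  have hTms : MeasurableSet {x | φ x = ⊤ ∨ φt x = ⊤} := by
    have he : {x | φ x = ⊤ ∨ φt x = ⊤} = φ ⁻¹' {⊤} ∪ φt ⁻¹' {⊤} := by
      ext x; simp [Set.mem_preimage]
    rw [he]
    exact (hmφm (measurableSet_singleton _)).union (hmφtm (measurableSet_singleton _))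
  have hfcm : Measurable (fun x => (l : EReal) * φ x + ((1 - l : ℝ) : EReal) * φt x) := by
    have heq : (fun x => (l : EReal) * φ x + ((1 - l : ℝ) : EReal) * φt x) =
        fun x => if φ x = ⊤ ∨ φt x = ⊤ then (⊤ : EReal)
          else ((l * (φ x).toReal + (1-l) * (φt x).toReal : ℝ) : EReal) := funext hfc
    rw [heq]
    exact Measurable.ite hTms measurable_const
      (((hmφm.ereal_toReal.const_mul l).add
        (hmφtm.ereal_toReal.const_mul (1-l))).coe_real_ereal)
  have hnegm : Measurable (fun x => -(φ x)) := continuous_neg.measurable.comp hmφm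
  have hnegtm : Measurable (fun x => -(φt x)) := continuous_neg.measurable.comp hmφtm
  have hnegcm : Measurable (fun x => -((l : EReal) * φ x + ((1 - l : ℝ) : EReal) * φt x)) :=
    continuous_neg.measurable.comp hfcm
  have mepφ : Measurable fun x => eposPart (φ x) := measurable_eposPart.comp hmφm
  have mepφt : Measurable fun x => eposPart (φt x) := measurable_eposPart.comp hmφtm
  have mepc : Measurable fun x =>
      eposPart ((l : EReal) * φ x + ((1 - l : ℝ) : EReal) * φt x) :=
    measurable_eposPart.comp hfcm
  have mepnφ : Measurable fun x => eposPart (-(φ x)) := measurable_eposPart.comp hnegm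
  have mepnφt : Measurable fun x => eposPart (-(φt x)) := measurable_eposPart.comp hnegtm
  have mepnc : Measurable fun x =>
      eposPart (-((l : EReal) * φ x + ((1 - l : ℝ) : EReal) * φt x)) :=
    measurable_eposPart.comp hnegcm
  have mNφ : Measurable fun x => ENNReal.ofReal (negExpE (φ x)) :=
    ENNReal.measurable_ofReal.comp (measurable_negExpE.comp hmφm)
  have mNφt : Measurable fun x => ENNReal.ofReal (negExpE (φt x)) :=
    ENNReal.measurable_ofReal.comp (measurable_negExpE.comp hmφtm)
  have mNc : Measurable fun x =>
      ENNReal.ofReal (negExpE ((l : EReal) * φ x + ((1 - l : ℝ) : EReal) * φt x)) :=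
    ENNReal.measurable_ofReal.comp (measurable_negExpE.comp hfcm)
  have mq : Measurable fun x => ENNReal.ofReal
      (if φ x = ⊤ ∨ φt x = ⊤ then 0
       else Real.exp (-(max (φ x).toReal (φt x).toReal)) *
         ((φ x).toReal - (φt x).toReal) ^ 2) :=
    ENNReal.measurable_ofReal.comp (Measurable.ite hTms measurable_const
      ((Real.measurable_exp.comp (hmφm.ereal_toReal.max hmφtm.ereal_toReal).neg).mul
        ((hmφm.ereal_toReal.sub hmφtm.ereal_toReal).pow_const 2)))
  -- name the integrals
  set Aφ := ∫⁻ x, eposPart (φ x) ∂P with hAφdef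
  set Bφ := ∫⁻ x, eposPart (-(φ x)) ∂P with hBφdef
  set Eφ := ∫⁻ x, ENNReal.ofReal (negExpE (φ x)) with hEφdef
  set Aφt := ∫⁻ x, eposPart (φt x) ∂P with hAφtdef
  set Bφt := ∫⁻ x, eposPart (-(φt x)) ∂P with hBφtdef
  set Eφt := ∫⁻ x, ENNReal.ofReal (negExpE (φt x)) with hEφtdef
  set Ac := ∫⁻ x, eposPart ((l : EReal) * φ x + ((1 - l : ℝ) : EReal) * φt x) ∂P with hAcdef
  set Bc := ∫⁻ x, eposPart (-((l : EReal) * φ x + ((1 - l : ℝ) : EReal) * φt x)) ∂P with hBcdef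
  set Ec := ∫⁻ x, ENNReal.ofReal
      (negExpE ((l : EReal) * φ x + ((1 - l : ℝ) : EReal) * φt x)) with hEcdef
  set Q := ∫⁻ x, ENNReal.ofReal
      (if φ x = ⊤ ∨ φt x = ⊤ then 0
       else Real.exp (-(max (φ x).toReal (φt x).toReal)) *
         ((φ x).toReal - (φt x).toReal) ^ 2) with hQdef
  have hQne : Q ≠ ⊤ := by rw [hQdef]; exact (R_lt_top hφ hφt).ne
  have hBφne : Bφ ≠ ⊤ := by
    rw [hBφdef]
    exact ((B_bound P hm0 hbφ hmφ).trans_lt ENNReal.ofReal_lt_top).ne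
  have hBφtne : Bφt ≠ ⊤ := by
    rw [hBφtdef]
    exact ((B_bound P hm0 hbφt hmφt).trans_lt ENNReal.ofReal_lt_top).ne
  have hBcne : Bc ≠ ⊤ := by
    rw [hBcdef]
    exact ((B_bound P hm0 hfcbot hmc).trans_lt ENNReal.ofReal_lt_top).ne
  -- pointwise identity for the linear part
  have hL1pt : ∀ x, eposPart ((l : EReal) * φ x + ((1 - l : ℝ) : EReal) * φt x)
        + ENNReal.ofReal l * eposPart (-(φ x))
        + ENNReal.ofReal (1-l) * eposPart (-(φt x))
      = ENNReal.ofReal l * eposPart (φ x) + ENNReal.ofReal (1-l) * eposPart (φt x)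
        + eposPart (-((l : EReal) * φ x + ((1 - l : ℝ) : EReal) * φt x)) := by
    intro x
    by_cases hT : φ x = ⊤ ∨ φt x = ⊤
    · have hc : (l : EReal) * φ x + ((1 - l : ℝ) : EReal) * φt x = ⊤ := by
        rw [hfc x, if_pos hT]
      rw [hc, eposPart_top, top_add, top_add]
      rcases hT with h | h
      · rw [h, eposPart_top, ENNReal.mul_top (ENNReal.ofReal_pos.2 hl0').ne',
          top_add, top_add]
      · rw [h, eposPart_top, ENNReal.mul_top (ENNReal.ofReal_pos.2 hl1c).ne',
          add_top, top_add]
    · push_neg at hT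
      have hpx : φ x = ((φ x).toReal : EReal) := (EReal.coe_toReal hT.1 (hbφ x)).symm
      have hptx : φt x = ((φt x).toReal : EReal) := (EReal.coe_toReal hT.2 (hbφt x)).symm
      have hcx : (l : EReal) * φ x + ((1 - l : ℝ) : EReal) * φt x =
          ((l * (φ x).toReal + (1-l) * (φt x).toReal : ℝ) : EReal) := by
        rw [hfc x, if_neg (not_or.2 hT)]
      rw [hcx, eposPart_coe, eposPart_neg_rep (EReal.coe_ne_bot _), EReal.toReal_coe]
      conv_lhs => rw [hpx, hptx]
      conv_rhs => rw [hpx, hptx]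
      rw [eposPart_neg_rep (EReal.coe_ne_bot _), eposPart_neg_rep (EReal.coe_ne_bot _),
        eposPart_coe, eposPart_coe, EReal.toReal_coe, EReal.toReal_coe]
      exact ofReal_combo_identity l _ _ hl0 hl1
  have hL1 : Ac + ENNReal.ofReal l * Bφ + ENNReal.ofReal (1-l) * Bφt
      = ENNReal.ofReal l * Aφ + ENNReal.ofReal (1-l) * Aφt + Bc := by
    have e1 : (∫⁻ x, (eposPart ((l : EReal) * φ x + ((1 - l : ℝ) : EReal) * φt x)
          + ENNReal.ofReal l * eposPart (-(φ x))
          + ENNReal.ofReal (1-l) * eposPart (-(φt x))) ∂P)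
        = Ac + ENNReal.ofReal l * Bφ + ENNReal.ofReal (1-l) * Bφt := by
      rw [lintegral_add_left (mepc.fun_add (mepnφ.const_mul _)),
        lintegral_add_left mepc, lintegral_const_mul _ mepnφ, lintegral_const_mul _ mepnφt]
    have e2 : (∫⁻ x, (ENNReal.ofReal l * eposPart (φ x) + ENNReal.ofReal (1-l) * eposPart (φt x)
          + eposPart (-((l : EReal) * φ x + ((1 - l : ℝ) : EReal) * φt x))) ∂P)
        = ENNReal.ofReal l * Aφ + ENNReal.ofReal (1-l) * Aφt + Bc := by
      rw [lintegral_add_left ((mepφ.const_mul _).fun_add (mepφt.const_mul _)),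
        lintegral_add_left (mepφ.const_mul _), lintegral_const_mul _ mepφ,
        lintegral_const_mul _ mepφt]
    rw [← e1, ← e2]
    exact lintegral_congr hL1pt
  -- pointwise inequality for the exponential part
  have hL2pt : ∀ x, ENNReal.ofReal
          (negExpE ((l : EReal) * φ x + ((1 - l : ℝ) : EReal) * φt x))
        + ENNReal.ofReal (l*(1-l)/2) * ENNReal.ofReal
          (if φ x = ⊤ ∨ φt x = ⊤ then 0
           else Real.exp (-(max (φ x).toReal (φt x).toReal)) *
             ((φ x).toReal - (φt x).toReal) ^ 2)
      ≤ ENNReal.ofReal l * ENNReal.ofReal (negExpE (φ x))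
        + ENNReal.ofReal (1-l) * ENNReal.ofReal (negExpE (φt x)) := by
    intro x
    by_cases hT : φ x = ⊤ ∨ φt x = ⊤
    · have hc : (l : EReal) * φ x + ((1 - l : ℝ) : EReal) * φt x = ⊤ := by
        rw [hfc x, if_pos hT]
      rw [hc, negExpE_top, if_pos hT]
      simp
    · push_neg at hT
      have hpx : φ x = ((φ x).toReal : EReal) := (EReal.coe_toReal hT.1 (hbφ x)).symm
      have hptx : φt x = ((φt x).toReal : EReal) := (EReal.coe_toReal hT.2 (hbφt x)).symm
      have hcx : (l : EReal) * φ x + ((1 - l : ℝ) : EReal) * φt x =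
          ((l * (φ x).toReal + (1-l) * (φt x).toReal : ℝ) : EReal) := by
        rw [hfc x, if_neg (not_or.2 hT)]
      rw [hcx, negExpE_coe, if_neg (not_or.2 hT)]
      conv_rhs => rw [hpx, hptx]
      rw [negExpE_coe, negExpE_coe]
      set a : ℝ := (φ x).toReal
      set b : ℝ := (φt x).toReal
      have hkey := key_exp l a b hl0 hl1
      calc ENNReal.ofReal (Real.exp (-(l*a+(1-l)*b)))
            + ENNReal.ofReal (l*(1-l)/2) * ENNReal.ofReal (Real.exp (-(max a b)) * (a-b)^2)
          = ENNReal.ofReal (Real.exp (-(l*a+(1-l)*b))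
              + l*(1-l)/2 * (Real.exp (-(max a b)) * (a-b)^2)) := by
            rw [← ENNReal.ofReal_mul (by positivity),
              ← ENNReal.ofReal_add (by positivity) (by positivity)]
        _ ≤ ENNReal.ofReal (l * Real.exp (-a) + (1-l) * Real.exp (-b)) :=
            ENNReal.ofReal_le_ofReal hkey
        _ = ENNReal.ofReal l * ENNReal.ofReal (Real.exp (-a))
              + ENNReal.ofReal (1-l) * ENNReal.ofReal (Real.exp (-b)) := by
            rw [ENNReal.ofReal_add (by positivity) (by positivity),
              ENNReal.ofReal_mul hl0, ENNReal.ofReal_mul (by linarith)]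
  have hL2 : Ec + ENNReal.ofReal (l*(1-l)/2) * Q
      ≤ ENNReal.ofReal l * Eφ + ENNReal.ofReal (1-l) * Eφt := by
    have e1 : (∫⁻ x : EuclideanSpace ℝ (Fin d), (ENNReal.ofReal
          (negExpE ((l : EReal) * φ x + ((1 - l : ℝ) : EReal) * φt x))
        + ENNReal.ofReal (l*(1-l)/2) * ENNReal.ofReal
          (if φ x = ⊤ ∨ φt x = ⊤ then 0
           else Real.exp (-(max (φ x).toReal (φt x).toReal)) *
             ((φ x).toReal - (φt x).toReal) ^ 2)))
        = Ec + ENNReal.ofReal (l*(1-l)/2) * Q := by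
      rw [lintegral_add_left mNc, lintegral_const_mul _ mq]
    have e2 : (∫⁻ x : EuclideanSpace ℝ (Fin d),
          (ENNReal.ofReal l * ENNReal.ofReal (negExpE (φ x))
            + ENNReal.ofReal (1-l) * ENNReal.ofReal (negExpE (φt x))))
        = ENNReal.ofReal l * Eφ + ENNReal.ofReal (1-l) * Eφt := by
      rw [lintegral_add_left (mNφ.const_mul _), lintegral_const_mul _ mNφ,
        lintegral_const_mul _ mNφt]
    rw [← e1, ← e2]
    exact lintegral_mono hL2pt
  -- case split on infiniteness
  by_cases htop : Aφ = ⊤ ∨ Eφ = ⊤ ∨ Aφt = ⊤ ∨ Eφt = ⊤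
  · -- right side is ⊤
    have hsum : (l:EReal) * ((Aφ:EReal) - (Bφ:EReal) + (Eφ:EReal))
        + ((1-l:ℝ):EReal) * ((Aφt:EReal) - (Bφt:EReal) + (Eφt:EReal)) = ⊤ := by
      rcases htop with h | h | h | h
      · rw [gamma_eq_top hBφne (Or.inl h), EReal.coe_mul_top_of_pos hl0']
        exact EReal.top_add_of_ne_bot (coe_pos_mul_ne_bot hl1c (gamma_ne_bot hBφtne))
      · rw [gamma_eq_top hBφne (Or.inr h), EReal.coe_mul_top_of_pos hl0']
        exact EReal.top_add_of_ne_bot (coe_pos_mul_ne_bot hl1c (gamma_ne_bot hBφtne))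
      · rw [gamma_eq_top hBφtne (Or.inl h), EReal.coe_mul_top_of_pos hl1c]
        exact EReal.add_top_of_ne_bot (coe_pos_mul_ne_bot hl0' (gamma_ne_bot hBφne))
      · rw [gamma_eq_top hBφtne (Or.inr h), EReal.coe_mul_top_of_pos hl1c]
        exact EReal.add_top_of_ne_bot (coe_pos_mul_ne_bot hl0' (gamma_ne_bot hBφne))
    rw [hsum, EReal.coe_ennreal_eq hQne, ← EReal.coe_mul, EReal.top_sub_coe]
    exact le_top
  · push_neg at htop
    obtain ⟨hAφne, hEφne, hAφtne, hEφtne⟩ := htop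
    have hlBφ : ENNReal.ofReal l * Bφ ≠ ⊤ := ENNReal.mul_ne_top ENNReal.ofReal_ne_top hBφne
    have hlBφt : ENNReal.ofReal (1-l) * Bφt ≠ ⊤ :=
      ENNReal.mul_ne_top ENNReal.ofReal_ne_top hBφtne
    have hlAφ : ENNReal.ofReal l * Aφ ≠ ⊤ := ENNReal.mul_ne_top ENNReal.ofReal_ne_top hAφne
    have hlAφt : ENNReal.ofReal (1-l) * Aφt ≠ ⊤ :=
      ENNReal.mul_ne_top ENNReal.ofReal_ne_top hAφtne
    have hlEφ : ENNReal.ofReal l * Eφ ≠ ⊤ := ENNReal.mul_ne_top ENNReal.ofReal_ne_top hEφne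
    have hlEφt : ENNReal.ofReal (1-l) * Eφt ≠ ⊤ :=
      ENNReal.mul_ne_top ENNReal.ofReal_ne_top hEφtne
    have hAcne : Ac ≠ ⊤ := by
      have h1 : Ac ≤ ENNReal.ofReal l * Aφ + ENNReal.ofReal (1-l) * Aφt + Bc := by
        rw [← hL1]; exact le_add_right (le_add_right le_rfl)
      exact ne_top_of_le_ne_top
        (ENNReal.add_ne_top.2 ⟨ENNReal.add_ne_top.2 ⟨hlAφ, hlAφt⟩, hBcne⟩) h1
    have hEcne : Ec ≠ ⊤ := by
      have h1 : Ec ≤ ENNReal.ofReal l * Eφ + ENNReal.ofReal (1-l) * Eφt :=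
        le_trans (le_add_right le_rfl) hL2
      exact ne_top_of_le_ne_top (ENNReal.add_ne_top.2 ⟨hlEφ, hlEφt⟩) h1
    -- convert hL1 to reals
    have r1 : Ac.toReal + l * Bφ.toReal + (1-l) * Bφt.toReal
        = l * Aφ.toReal + (1-l) * Aφt.toReal + Bc.toReal := by
      have h1 := congrArg ENNReal.toReal hL1
      rw [ENNReal.toReal_add (ENNReal.add_ne_top.2 ⟨hAcne, hlBφ⟩) hlBφt,
        ENNReal.toReal_add hAcne hlBφ,
        ENNReal.toReal_add (ENNReal.add_ne_top.2 ⟨hlAφ, hlAφt⟩) hBcne,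
        ENNReal.toReal_add hlAφ hlAφt,
        ENNReal.toReal_mul, ENNReal.toReal_mul, ENNReal.toReal_mul, ENNReal.toReal_mul,
        ENNReal.toReal_ofReal hl0, ENNReal.toReal_ofReal (by linarith)] at h1
      exact h1
    -- convert hL2 to reals
    have r2 : Ec.toReal + (l*(1-l)/2) * Q.toReal
        ≤ l * Eφ.toReal + (1-l) * Eφt.toReal := by
      have h1 := ENNReal.toReal_mono (ENNReal.add_ne_top.2 ⟨hlEφ, hlEφt⟩) hL2
      rw [ENNReal.toReal_add hEcne (ENNReal.mul_ne_top ENNReal.ofReal_ne_top hQne),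
        ENNReal.toReal_add hlEφ hlEφt,
        ENNReal.toReal_mul, ENNReal.toReal_mul, ENNReal.toReal_mul,
        ENNReal.toReal_ofReal (show (0:ℝ) ≤ l*(1-l)/2 by nlinarith),
        ENNReal.toReal_ofReal hl0,
        ENNReal.toReal_ofReal (show (0:ℝ) ≤ 1-l by linarith)] at h1
      exact h1
    -- rewrite goal into real coercions
    rw [EReal.coe_ennreal_eq hAcne, EReal.coe_ennreal_eq hBcne, EReal.coe_ennreal_eq hEcne,
      EReal.coe_ennreal_eq hAφne, EReal.coe_ennreal_eq hBφne, EReal.coe_ennreal_eq hEφne,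
      EReal.coe_ennreal_eq hAφtne, EReal.coe_ennreal_eq hBφtne, EReal.coe_ennreal_eq hEφtne,
      EReal.coe_ennreal_eq hQne]
    rw [← EReal.coe_sub, ← EReal.coe_add, ← EReal.coe_sub, ← EReal.coe_add,
      ← EReal.coe_sub, ← EReal.coe_add, ← EReal.coe_mul, ← EReal.coe_mul, ← EReal.coe_mul,
      ← EReal.coe_add, ← EReal.coe_sub]
    apply EReal.coe_le_coe_iff.2
    nlinarith [r1, r2]
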